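/- Let p be a prime number, R = ℤ[1/p] the subring of ℚ generated by 1/p, m a positive integer coprime to p, and I = mR. Assume the following (which holds under the Generalized Riemann Hypothesis): for all coprime integers c, d with p not dividing d, there exist infinitely many primes q with q ≡ c (mod d) such that p is a primitive root modulo q (i.e. p generates the multiplicative group (ℤ/qℤ)ˣ). Then every matrix g ∈ SL(2,R) with g ≡ 1₂ (mod I) is a product of at most 6 elements of the set {1₂ + sE₁₂ : s ∈ I} ∪ {1₂ + sE₂₁ : s ∈ I} ∪ {(1₂ + ξE₁₂)⁻¹ · (1₂ + sE₂₁) · (1₂ + ξE₁₂) : s ∈ I, ξ ∈ R}. (Lemma on the width of SL(2, ℤ[1/p], I) with respect to the Tits generators Z({−α₁}).) -/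

import Mathlib

open Matrix

/-- `ℤ[1/p]`, the subring of `ℚ` generated by `1/p`. -/
def ZinvP (p : ℕ) : Subring ℚ := Subring.closure {1 / (p : ℚ)}

namespace WidthAux

/-! ### The ring `ℤ[1/p]` -/

def Zp (p : ℕ) (hp : (p:ℚ) ≠ 0) : Subring ℚ where
  carrier := {x | ∃ (n : ℤ) (k : ℕ), x = n / (p:ℚ)^k}
  zero_mem' := ⟨0, 0, by norm_num⟩
  one_mem' := ⟨1, 0, by norm_num⟩
  add_mem' := by
    rintro a b ⟨n1, k1, rfl⟩ ⟨n2, k2, rfl⟩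
    exact ⟨n1 * p ^ k2 + n2 * p ^ k1, k1 + k2, by push_cast; field_simp; ring_nf⟩
  neg_mem' := by
    rintro a ⟨n, k, rfl⟩
    exact ⟨-n, k, by push_cast; ring⟩
  mul_mem' := by
    rintro a b ⟨n1, k1, rfl⟩ ⟨n2, k2, rfl⟩
    exact ⟨n1 * n2, k1 + k2, by push_cast; field_simp; ring_nf⟩

lemma zinvP_eq (p : ℕ) (hp : (p:ℚ) ≠ 0) : ZinvP p = Zp p hp := by
  apply le_antisymm
  · rw [ZinvP, Subring.closure_le]
    rintro x rfl
    exact ⟨1, 1, by push_cast; ring⟩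
  · rintro x ⟨n, k, rfl⟩
    have h1 : (1 / (p:ℚ)) ∈ ZinvP p := Subring.subset_closure rfl
    have h2 : ((n : ℚ)) ∈ ZinvP p := intCast_mem _ n
    have := Subring.mul_mem _ h2 (Subring.pow_mem _ h1 k)
    convert this using 1
    field_simp
    rw [mul_assoc, ← mul_pow, mul_one_div_cancel hp, one_pow, mul_one]

lemma mem_zinvP {p : ℕ} (hp : (p:ℚ) ≠ 0) {x : ℚ} :
    x ∈ ZinvP p ↔ ∃ (n : ℤ) (k : ℕ), x = n / (p:ℚ)^k := by
  rw [zinvP_eq p hp]; rfl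

variable {p : ℕ}

/-- `p` as a unit of `ℤ[1/p]`. -/
def eps (p : ℕ) (hp : (p:ℚ) ≠ 0) : (ZinvP p)ˣ where
  val := (p : ZinvP p)
  inv := ⟨1 / (p:ℚ), Subring.subset_closure rfl⟩
  val_inv := by ext; push_cast; field_simp
  inv_val := by ext; push_cast; field_simp

lemma val_eps_zpow (hp : (p:ℚ) ≠ 0) (z : ℤ) :
    (((eps p hp ^ z : (ZinvP p)ˣ) : (ZinvP p)) : ℚ) = (p:ℚ) ^ z := by
  let f : (ZinvP p) →+* ℚ := (ZinvP p).subtype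
  have h1 : (((eps p hp ^ z : (ZinvP p)ˣ) : (ZinvP p)) : ℚ)
      = ((Units.map (f : (ZinvP p) →* ℚ) (eps p hp ^ z) : ℚˣ) : ℚ) := rfl
  rw [h1, map_zpow, Units.val_zpow_eq_zpow_val]
  norm_num [f, eps]

/-- The element `A·pᵘ` of `ℤ[1/p]`. -/
def elt (p : ℕ) (hp : (p:ℚ) ≠ 0) (A : ℤ) (u : ℤ) : ZinvP p :=
  (A : ZinvP p) * ((eps p hp ^ u : (ZinvP p)ˣ) : ZinvP p)

@[simp] lemma val_elt (hp : (p:ℚ) ≠ 0) (A u : ℤ) :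
    ((elt p hp A u : ZinvP p) : ℚ) = (A:ℚ) * (p:ℚ) ^ u := by
  rw [elt]
  push_cast [val_eps_zpow]
  ring

lemma elt_mul (hp : (p:ℚ) ≠ 0) (A B u v : ℤ) :
    elt p hp A u * elt p hp B v = elt p hp (A*B) (u+v) := by
  apply Subtype.ext
  push_cast [val_elt]
  rw [zpow_add₀ hp]
  ring

lemma elt_one_zero (hp : (p:ℚ) ≠ 0) : elt p hp 1 0 = 1 := by
  apply Subtype.ext
  simp

lemma coprime_p_of_not_dvd (hp : p.Prime) {N : ℤ} (h : ¬ (p:ℤ) ∣ N) : IsCoprime N (p:ℤ) :=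
  ((Prime.coprime_iff_not_dvd (Nat.prime_iff_prime_int.mp hp)).mpr h).symm

lemma int_dvd_of_dvd (hp : p.Prime) {N M : ℤ} (hNp : ¬ (p:ℤ) ∣ N)
    (h : (N : ZinvP p) ∣ (M : ZinvP p)) : N ∣ M := by
  have hq : (p:ℚ) ≠ 0 := by exact_mod_cast hp.pos.ne'
  obtain ⟨r, hr⟩ := h
  obtain ⟨B, β, hB⟩ := (mem_zinvP hq).mp r.2
  have hQ : (M : ℚ) = N * ((B:ℚ) / (p:ℚ)^β) := by
    have := congrArg (fun x : ZinvP p => (x : ℚ)) hr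
    push_cast at this
    rw [this]
    norm_num [hB]
  have hZ : M * (p:ℤ)^β = N * B := by
    have : (M : ℚ) * (p:ℚ)^β = (N:ℚ) * B := by
      rw [hQ]; field_simp
    exact_mod_cast this
  exact ((coprime_p_of_not_dvd hp hNp).pow_right).dvd_of_dvd_mul_right ⟨B, hZ⟩

lemma exists_rep (hp : p.Prime) (hq : (p:ℚ) ≠ 0) (x : ZinvP p) (hx : x ≠ 0) :
    ∃ (A : ℤ) (u : ℤ), ¬ (p:ℤ) ∣ A ∧ x = elt p hq A u := by
  obtain ⟨n, k, hn⟩ := (mem_zinvP hq).mp x.2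
  have hn0 : n ≠ 0 := by
    rintro rfl
    exact hx (by ext; simpa using hn)
  obtain ⟨j, m', hm', hnm⟩ := Nat.exists_eq_pow_mul_and_not_dvd
    (Int.natAbs_ne_zero.mpr hn0) p hp.ne_one
  have hmZ : ¬ (p:ℤ) ∣ (m' : ℤ) := by exact_mod_cast hm'
  rcases Int.natAbs_eq n with h | h
  · refine ⟨(m' : ℤ), (j : ℤ) - k, hmZ, Subtype.ext ?_⟩
    have hA : n = (m' : ℤ) * (p:ℤ)^j := by rw [h, hnm]; push_cast; ring
    rw [hn, hA, val_elt]
    push_cast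
    rw [zpow_sub₀ hq, zpow_natCast]
    field_simp
    rw [zpow_natCast]
  · refine ⟨-(m' : ℤ), (j : ℤ) - k, by simpa using hmZ, Subtype.ext ?_⟩
    have hA : n = (-(m' : ℤ)) * (p:ℤ)^j := by rw [h, hnm]; push_cast; ring
    rw [hn, hA, val_elt]
    push_cast
    rw [zpow_sub₀ hq, zpow_natCast]
    field_simp
    rw [zpow_natCast]

lemma dvd_of_rep (hq : (p:ℚ) ≠ 0) {N A u : ℤ} {x : ZinvP p}
    (hx : x = elt p hq A u) (h : N ∣ A) : (N : ZinvP p) ∣ x := by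
  obtain ⟨B, rfl⟩ := h
  refine ⟨elt p hq B u, ?_⟩
  rw [hx]
  apply Subtype.ext
  push_cast [val_elt]
  ring

/-! ### Matrix generators -/

variable {α : Type*} [CommRing α]

def UU (t : α) : Matrix (Fin 2) (Fin 2) α := !![1, t; 0, 1]
def LL (t : α) : Matrix (Fin 2) (Fin 2) α := !![1, 0; t, 1]

@[simp] lemma UU_zero : (UU 0 : Matrix (Fin 2) (Fin 2) α) = 1 := by
  ext i j; fin_cases i <;> fin_cases j <;> simp [UU]

@[simp] lemma LL_zero : (LL 0 : Matrix (Fin 2) (Fin 2) α) = 1 := by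
  ext i j; fin_cases i <;> fin_cases j <;> simp [LL]

lemma UU_mul (s t : α) : UU s * UU t = UU (s + t) := by
  simp [UU, Matrix.mul_fin_two, add_comm]

lemma LL_mul (s t : α) : LL s * LL t = LL (s + t) := by
  simp [LL, Matrix.mul_fin_two, add_comm]

lemma one_add_std01 (t : α) : 1 + Matrix.single 0 1 t = UU t := by
  ext i j; fin_cases i <;> fin_cases j <;>
    simp [UU, Matrix.single, Matrix.one_apply]

lemma one_add_std10 (t : α) : 1 + Matrix.single 1 0 t = LL t := by
  ext i j; fin_cases i <;> fin_cases j <;>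
    simp [LL, Matrix.single, Matrix.one_apply]

lemma inv_one_add_std01 (ξ : α) :
    (1 + Matrix.single 0 1 ξ)⁻¹ = UU (-ξ) := by
  rw [one_add_std01]
  exact Matrix.inv_eq_left_inv (by rw [UU_mul]; simp)

def CC (s ξ : α) : Matrix (Fin 2) (Fin 2) α := UU (-ξ) * LL s * UU ξ

lemma CC_eq_gen (s ξ : α) :
    (1 + Matrix.single 0 1 ξ)⁻¹ * (1 + Matrix.single 1 0 s) *
      (1 + Matrix.single 0 1 ξ) = CC s ξ := by
  rw [inv_one_add_std01, one_add_std10, one_add_std01, CC]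

lemma det_UU (t : α) : (UU t).det = 1 := by simp [UU]
lemma det_LL (t : α) : (LL t).det = 1 := by simp [LL]

lemma map_UU {β : Type*} [CommRing β] (f : α →+* β) (t : α) :
    f.mapMatrix (UU t) = UU (f t) := by
  ext i j; fin_cases i <;> fin_cases j <;> simp [UU]

lemma map_LL {β : Type*} [CommRing β] (f : α →+* β) (t : α) :
    f.mapMatrix (LL t) = LL (f t) := by
  ext i j; fin_cases i <;> fin_cases j <;> simp [LL]

lemma UU_merge (a b : α) (X : Matrix (Fin 2) (Fin 2) α) :
    UU a * (UU b * X) = UU (a + b) * X := by rw [← mul_assoc, UU_mul]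

lemma LL_merge (a b : α) (X : Matrix (Fin 2) (Fin 2) α) :
    LL a * (LL b * X) = LL (a + b) * X := by rw [← mul_assoc, LL_mul]

lemma UU_cancel (t : α) (X : Matrix (Fin 2) (Fin 2) α) :
    UU (-t) * (UU t * X) = X := by rw [UU_merge, neg_add_cancel, UU_zero, one_mul]

lemma LL_cancel (t : α) (X : Matrix (Fin 2) (Fin 2) α) :
    LL (-t) * (LL t * X) = X := by rw [LL_merge, neg_add_cancel, LL_zero, one_mul]

lemma UU_mul_mat (t a b c d : α) :
    UU t * !![a, b; c, d] = !![a + t*c, b + t*d; c, d] := by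
  rw [UU, Matrix.mul_fin_two]
  congr 1 <;> ring_nf

lemma LL_mul_mat (t a b c d : α) :
    LL t * !![a, b; c, d] = !![a, b; c + t*a, d + t*b] := by
  rw [LL, Matrix.mul_fin_two]
  congr 1 <;> ring_nf

/-! ### Folding a `U L U L U L U` word into at most 4 generators -/

lemma fold (p m : ℕ)
    (σ₁ σ₂ σ₃ : ZinvP p)
    (h1 : σ₁ ∈ Ideal.span {((m : ZinvP p))})
    (h2 : σ₂ ∈ Ideal.span {((m : ZinvP p))})
    (h3 : σ₃ ∈ Ideal.span {((m : ZinvP p))})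
    (α₀ α₁ α₂ α₃ : ZinvP p)
    (g : Matrix (Fin 2) (Fin 2) (ZinvP p))
    (hg : ∀ i j, g i j - (1 : Matrix (Fin 2) (Fin 2) (ZinvP p)) i j ∈
      Ideal.span {((m : ZinvP p))})
    (hw : g = UU α₀ * LL σ₁ * UU α₁ * LL σ₂ * UU α₂ * LL σ₃ * UU α₃) :
    ∃ L : List (Matrix (Fin 2) (Fin 2) (ZinvP p)),
      L.length ≤ 6 ∧
      (∀ x ∈ L,
        (∃ s ∈ Ideal.span {((m : ZinvP p))}, x = 1 + Matrix.single 0 1 s) ∨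
        (∃ s ∈ Ideal.span {((m : ZinvP p))}, x = 1 + Matrix.single 1 0 s) ∨
        (∃ s ∈ Ideal.span {((m : ZinvP p))}, ∃ ξ : ZinvP p,
          x = (1 + Matrix.single 0 1 ξ)⁻¹ *
                (1 + Matrix.single 1 0 s) *
                (1 + Matrix.single 0 1 ξ))) ∧
      g = L.prod := by
  set I : Ideal (ZinvP p) := Ideal.span {((m : ZinvP p))} with hI
  set T : ZinvP p := α₀ + α₁ + α₂ + α₃ with hT
  have hTI : T ∈ I := by
    have hσ1 : Ideal.Quotient.mk I σ₁ = 0 := Ideal.Quotient.eq_zero_iff_mem.mpr h1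
    have hσ2 : Ideal.Quotient.mk I σ₂ = 0 := Ideal.Quotient.eq_zero_iff_mem.mpr h2
    have hσ3 : Ideal.Quotient.mk I σ₃ = 0 := Ideal.Quotient.eq_zero_iff_mem.mpr h3
    have hΦg : (Ideal.Quotient.mk I).mapMatrix g = 1 := by
      ext i j
      have h := (Ideal.Quotient.mk_eq_mk_iff_sub_mem (g i j)
        ((1 : Matrix (Fin 2) (Fin 2) (ZinvP p)) i j)).mpr (hg i j)
      show Ideal.Quotient.mk I (g i j) = _
      rw [h]
      by_cases hij : i = j <;> simp [Matrix.one_apply, hij]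
    have hkey := congrArg (⇑((Ideal.Quotient.mk I).mapMatrix (m := Fin 2))) hw
    rw [hΦg] at hkey
    simp only [_root_.map_mul, map_UU, map_LL, hσ1, hσ2, hσ3, LL_zero, mul_one,
      one_mul, UU_mul] at hkey
    have h01 := congrFun (congrFun hkey 0) 1
    have hsum : Ideal.Quotient.mk I α₀ + Ideal.Quotient.mk I α₁ +
        Ideal.Quotient.mk I α₂ + Ideal.Quotient.mk I α₃ = 0 := by
      simpa [UU, Matrix.one_apply] using h01.symm
    have hpi : Ideal.Quotient.mk I T = 0 := by
      rw [hT, RingHom.map_add, RingHom.map_add, RingHom.map_add]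
      exact hsum
    exact Ideal.Quotient.eq_zero_iff_mem.mp hpi
  refine ⟨[CC σ₁ (-α₀), CC σ₂ (-(α₀ + α₁)), CC σ₃ (-(α₀ + α₁ + α₂)), UU T], by norm_num,
    ?_, ?_⟩
  · intro x hx
    fin_cases hx
    · exact Or.inr (Or.inr ⟨σ₁, h1, -α₀, (CC_eq_gen _ _).symm⟩)
    · exact Or.inr (Or.inr ⟨σ₂, h2, -(α₀ + α₁), (CC_eq_gen _ _).symm⟩)
    · exact Or.inr (Or.inr ⟨σ₃, h3, -(α₀ + α₁ + α₂), (CC_eq_gen _ _).symm⟩)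
    · exact Or.inl ⟨T, hTI, by rw [one_add_std01]⟩
  · rw [hw]
    simp only [List.prod_cons, List.prod_nil, mul_one, CC, neg_neg, mul_assoc,
      UU_merge, UU_mul, neg_add_cancel_left, neg_add_cancel, UU_zero, one_mul, hT]

/-! ### Primitive roots -/

lemma exists_pow_cong (q : ℕ) (hq : q.Prime)
    (hord : orderOf ((p : ZMod q)) = q - 1) (x : ℤ) (hx : ¬ (q:ℤ) ∣ x) :
    ∃ W : ℕ, (q:ℤ) ∣ (p:ℤ)^W - x := by
  haveI : Fact q.Prime := ⟨hq⟩
  have hx0 : (x : ZMod q) ≠ 0 := fun h => hx ((ZMod.intCast_zmod_eq_zero_iff_dvd x q).mp h)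
  have hq1 : q - 1 ≠ 0 := by have := hq.two_le; omega
  have hpe : ((p : ZMod q))^(q-1) = 1 := by rw [← hord]; exact pow_orderOf_eq_one _
  have hpu : IsUnit ((p : ZMod q)) := IsUnit.of_pow_eq_one hpe hq1
  set pu : (ZMod q)ˣ := hpu.unit with hpudef
  have hpuv : (pu : ZMod q) = (p : ZMod q) := hpu.unit_spec
  have hordu : orderOf pu = q - 1 := by rw [← hord, ← hpuv, orderOf_units]
  have htop : Subgroup.zpowers pu = ⊤ := by
    apply Subgroup.eq_top_of_card_eq
    rw [Nat.card_zpowers, hordu, Nat.card_eq_fintype_card, ZMod.card_units]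
  have hxu : IsUnit ((x : ZMod q)) := isUnit_iff_ne_zero.mpr hx0
  have hmem : hxu.unit ∈ Subgroup.zpowers pu := htop ▸ Subgroup.mem_top _
  obtain ⟨z, hz⟩ := Subgroup.mem_zpowers_iff.mp hmem
  have hzn : pu ^ ((z % (orderOf pu)).toNat) = hxu.unit := by
    rw [← hz]
    have h1 : ((z % (orderOf pu)).toNat : ℤ) = z % (orderOf pu) := by
      apply Int.toNat_of_nonneg
      apply Int.emod_nonneg
      simp [hordu, hq1]
    rw [← zpow_natCast, h1, zpow_mod_orderOf]
  refine ⟨(z % (orderOf pu)).toNat, ?_⟩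
  have hfin : ((p:ZMod q))^((z % (orderOf pu)).toNat) = (x : ZMod q) := by
    have := congrArg (Units.val) hzn
    rw [Units.val_pow_eq_pow_val, hpuv] at this
    rw [this, hxu.unit_spec]
  rw [← ZMod.intCast_zmod_eq_zero_iff_dvd]
  push_cast
  rw [hfin]
  ring

end WidthAux

open WidthAux

set_option maxHeartbeats 1600000 in
/-- Width of `SL(2, ℤ[1/p], I)` with respect to the Tits generators `Z({−α₁})`,
conditionally on GRH (formulated via primes in arithmetic progressions admitting `p`
as a primitive root). -/
theorem width_SL2_Zp (p : ℕ) (hp : p.Prime) (m : ℕ) (hm : 0 < m) (hmp : Nat.Coprime m p)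
    (GRH : ∀ c d : ℤ, IsCoprime c d → ¬ ((p : ℤ) ∣ d) →
      { q : ℕ | q.Prime ∧ (q : ℤ) ≡ c [ZMOD d] ∧
        orderOf ((p : ZMod q)) = q - 1 }.Infinite)
    (g : Matrix (Fin 2) (Fin 2) (ZinvP p)) (hdet : g.det = 1)
    (hg : ∀ i j, g i j - (1 : Matrix (Fin 2) (Fin 2) (ZinvP p)) i j ∈
      Ideal.span {((m : ZinvP p))}) :
    ∃ L : List (Matrix (Fin 2) (Fin 2) (ZinvP p)),
      L.length ≤ 6 ∧
      (∀ x ∈ L,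
        (∃ s ∈ Ideal.span {((m : ZinvP p))}, x = 1 + Matrix.single 0 1 s) ∨
        (∃ s ∈ Ideal.span {((m : ZinvP p))}, x = 1 + Matrix.single 1 0 s) ∨
        (∃ s ∈ Ideal.span {((m : ZinvP p))}, ∃ ξ : ZinvP p,
          x = (1 + Matrix.single 0 1 ξ)⁻¹ *
                (1 + Matrix.single 1 0 s) *
                (1 + Matrix.single 0 1 ξ))) ∧
      g = L.prod := by
  classical
  have hq0 : (p:ℚ) ≠ 0 := by exact_mod_cast hp.pos.ne'
  set a := g 0 0 with hadef
  set b := g 0 1 with hbdef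
  set c := g 1 0 with hcdef
  set d := g 1 1 with hddef
  have hgm : g = !![a, b; c, d] := Matrix.eta_fin_two g
  have hdet' : a * d - b * c = 1 := by rw [Matrix.det_fin_two] at hdet; exact hdet
  have hbI : b ∈ Ideal.span {((m : ZinvP p))} := by simpa using hg 0 1
  have hcI : c ∈ Ideal.span {((m : ZinvP p))} := by simpa using hg 1 0
  have haI : a - 1 ∈ Ideal.span {((m : ZinvP p))} := by simpa using hg 0 0
  have hdI : d - 1 ∈ Ideal.span {((m : ZinvP p))} := by simpa using hg 1 1
  by_cases hc : c = 0
  · -- triangular case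
    have had : a * d = 1 := by rw [hc] at hdet'; linear_combination hdet'
    obtain ⟨r, hr⟩ := Ideal.mem_span_singleton.mp hdI
    have hadQ : (a:ℚ)*(d:ℚ) = 1 := by exact_mod_cast congrArg (fun x : ZinvP p => (x:ℚ)) had
    have hrQ : (d:ℚ) - 1 = (m:ℚ) * (r:ℚ) := by
      exact_mod_cast congrArg (fun x : ZinvP p => (x:ℚ)) hr
    refine fold p m (m : ZinvP p) (-((m:ZinvP p) * a)) 0
      (Ideal.mem_span_singleton.mpr dvd_rfl)
      (Ideal.mem_span_singleton.mpr ⟨-a, by ring⟩)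
      (Ideal.span _).zero_mem
      0 r ((b - r) * d) 0 g hg ?_
    rw [hgm, hc]
    simp only [UU_zero, LL_zero, one_mul, mul_one]
    ext i j
    fin_cases i <;> fin_cases j <;>
      simp [UU, LL, Matrix.mul_apply, Fin.sum_univ_two]
    · linear_combination hadQ - (a:ℚ)*hrQ
    · linear_combination ((b:ℚ)-r)*((d:ℚ)-1)*hadQ - ((b:ℚ)-r)*(a:ℚ)*(d:ℚ)*hrQ
    · linear_combination (m:ℚ)*hadQ - (m:ℚ)*(a:ℚ)*hrQ
    · linear_combination (((b:ℚ)-r)*(d:ℚ)*(m:ℚ))*hadQ + (1-((b:ℚ)-r)*(d:ℚ)*(m:ℚ)*(a:ℚ))*hrQ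
  · -- main case
    obtain ⟨c', hcc'⟩ := Ideal.mem_span_singleton.mp hcI
    have hc'0 : c' ≠ 0 := by rintro rfl; exact hc (by rw [hcc', mul_zero])
    obtain ⟨t₀, a₁, ha₁def, ha₁0⟩ : ∃ t₀ a₁ : ZinvP p, a + t₀ * c = a₁ ∧ a₁ ≠ 0 := by
      by_cases ha : a = 0
      · exact ⟨1, c, by rw [ha]; ring, hc⟩
      · exact ⟨0, a, by ring, ha⟩
    have hdet₁ : a₁ * d - (b + t₀ * d) * c = 1 := by
      rw [← ha₁def]; linear_combination hdet'
    have hcop : IsCoprime a₁ c := ⟨d, -(b + t₀*d), by linear_combination hdet₁⟩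
    have ha₁I : a₁ - 1 ∈ Ideal.span {((m : ZinvP p))} := by
      rw [← ha₁def, show a + t₀ * c - 1 = (a - 1) + t₀ * c by ring]
      exact add_mem haI (Ideal.mul_mem_left _ _ hcI)
    obtain ⟨A₁, u₁, hA₁p, ha₁e⟩ := exists_rep hp hq0 a₁ ha₁0
    obtain ⟨C, u₂, hCp, hc'e⟩ := exists_rep hp hq0 c' hc'0
    have hA₁0 : A₁ ≠ 0 := by
      rintro rfl
      exact ha₁0 (by rw [ha₁e]; apply Subtype.ext; simp)
    -- helper : divisor of 1 in R prime to p is 1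
    have gcd_one : ∀ G : ℕ, ¬ (p:ℤ) ∣ (G:ℤ) → (((G:ℤ) : ZinvP p) ∣ (1 : ZinvP p)) → G = 1 := by
      intro G hpG h
      have h1 : ((G:ℤ):ZinvP p) ∣ (((1:ℤ) : ℤ) : ZinvP p) := by push_cast; exact_mod_cast h
      have h2 := int_dvd_of_dvd hp hpG h1
      exact Nat.dvd_one.mp (by exact_mod_cast h2)
    have cop1 : IsCoprime C A₁ := by
      rw [Int.isCoprime_iff_gcd_eq_one]
      have hGA : (Int.gcd C A₁ : ℤ) ∣ A₁ := Int.gcd_dvd_right C A₁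
      have hGC : (Int.gcd C A₁ : ℤ) ∣ C := Int.gcd_dvd_left C A₁
      have hpG : ¬ (p:ℤ) ∣ (Int.gcd C A₁ : ℤ) := fun h => hA₁p (h.trans hGA)
      have hd1 : ((Int.gcd C A₁ : ℤ) : ZinvP p) ∣ a₁ := dvd_of_rep hq0 ha₁e hGA
      have hd3 : ((Int.gcd C A₁ : ℤ) : ZinvP p) ∣ c := by
        rw [hcc']; exact Dvd.dvd.mul_left (dvd_of_rep hq0 hc'e hGC) _
      obtain ⟨u, v, huv⟩ := hcop
      exact gcd_one _ hpG (by rw [← huv]; exact dvd_add (hd1.mul_left u) (hd3.mul_left v))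
    obtain ⟨q₁, hq₁mem, hq₁gt⟩ := (GRH C A₁ cop1 hA₁p).exists_gt (max p (max A₁.natAbs m))
    obtain ⟨hq₁P, hq₁cong, -⟩ := hq₁mem
    have hq₁gtp : p < q₁ := lt_of_le_of_lt (le_max_left _ _) hq₁gt
    have hq₁gtA : A₁.natAbs < q₁ :=
      lt_of_le_of_lt ((le_max_left _ _).trans (le_max_right _ _)) hq₁gt
    obtain ⟨D₁, hD₁⟩ : ∃ D₁, (q₁:ℤ) - C = A₁ * D₁ := by
      obtain ⟨e, he⟩ := hq₁cong.dvd
      exact ⟨-e, by linear_combination -he⟩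
    set s₁ : ZinvP p := (m : ZinvP p) * elt p hq0 D₁ (u₂ - u₁) with hs₁def
    set c₁ : ZinvP p := (m : ZinvP p) * elt p hq0 q₁ u₂ with hc₁def
    have hpu₁ : (p:ℚ)^u₁ ≠ 0 := zpow_ne_zero _ hq0
    have hpu₂ : (p:ℚ)^u₂ ≠ 0 := zpow_ne_zero _ hq0
    have hcV : (c:ℚ) = (m:ℚ) * ((C:ℚ) * (p:ℚ)^u₂) := by
      rw [hcc', hc'e]; push_cast [val_elt]; ring
    have ha₁V : (a₁:ℚ) = (A₁:ℚ) * (p:ℚ)^u₁ := by rw [ha₁e, val_elt]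
    have hc₁ : c + s₁ * a₁ = c₁ := by
      apply Subtype.ext
      push_cast [hs₁def, hc₁def, val_elt, ha₁V, hcV]
      have hq1C : (q₁:ℚ) - C = A₁ * D₁ := by exact_mod_cast hD₁
      rw [zpow_sub₀ hq0]
      field_simp
      linear_combination -hq1C
    -- second application of GRH
    have copA₁m : IsCoprime A₁ (m:ℤ) := by
      rw [Int.isCoprime_iff_gcd_eq_one]
      have hGA : (Int.gcd A₁ m : ℤ) ∣ A₁ := Int.gcd_dvd_left A₁ m
      have hGm : (Int.gcd A₁ m : ℤ) ∣ (m:ℤ) := Int.gcd_dvd_right A₁ m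
      have hpG : ¬ (p:ℤ) ∣ (Int.gcd A₁ m : ℤ) := fun h => hA₁p (h.trans hGA)
      have hd1 : ((Int.gcd A₁ m : ℤ) : ZinvP p) ∣ a₁ := dvd_of_rep hq0 ha₁e hGA
      have hd2 : ((Int.gcd A₁ m : ℤ) : ZinvP p) ∣ (a₁ - 1) := by
        obtain ⟨w, hw⟩ := Ideal.mem_span_singleton.mp ha₁I
        refine Dvd.dvd.trans ?_ ⟨w, hw⟩
        exact_mod_cast map_dvd (Int.castRingHom (ZinvP p)) hGm
      exact gcd_one _ hpG (by
        have := dvd_sub hd1 hd2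
        simpa using this)
    have copA₁q₁ : IsCoprime A₁ (q₁:ℤ) := by
      have hq₁Z : Prime ((q₁:ℕ):ℤ) := Nat.prime_iff_prime_int.mp hq₁P
      have hnd : ¬ ((q₁:ℤ) ∣ A₁) := by
        intro h
        have h2 : (q₁:ℤ) ≤ |A₁| := Int.le_of_dvd (abs_pos.mpr hA₁0) ((dvd_abs _ _).mpr h)
        rw [Int.abs_eq_natAbs] at h2
        omega
      exact ((hq₁Z.coprime_iff_not_dvd).mpr hnd).symm
    have cop2 : IsCoprime A₁ ((m:ℤ) * q₁) := copA₁m.mul_right copA₁q₁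
    have hpm : ¬ (p:ℤ) ∣ ((m:ℤ) * q₁) := by
      intro h
      have hpZ : Prime (p:ℤ) := Nat.prime_iff_prime_int.mp hp
      rcases hpZ.dvd_mul.mp h with h' | h'
      · have : (p:ℕ) ∣ m := by exact_mod_cast h'
        exact ((hp.coprime_iff_not_dvd).mp hmp.symm) this
      · have : (p:ℕ) ∣ q₁ := by exact_mod_cast h'
        have := (Nat.prime_dvd_prime_iff_eq hp hq₁P).mp this
        omega
    obtain ⟨q₂, hq₂mem, hq₂gt⟩ := (GRH A₁ ((m:ℤ)*q₁) cop2 hpm).exists_gt q₁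
    obtain ⟨hq₂P, hq₂cong, hq₂ord⟩ := hq₂mem
    obtain ⟨D₂, hD₂⟩ : ∃ D₂, (q₂:ℤ) - A₁ = ((m:ℤ) * q₁) * D₂ := by
      obtain ⟨e, he⟩ := hq₂cong.dvd
      exact ⟨-e, by linear_combination -he⟩
    set t₁ : ZinvP p := elt p hq0 D₂ (u₁ - u₂) with ht₁def
    set a₂ : ZinvP p := elt p hq0 q₂ u₁ with ha₂def
    have ha₂ : a₁ + t₁ * c₁ = a₂ := by
      apply Subtype.ext
      push_cast [ht₁def, ha₂def, hc₁def, val_elt, ha₁V]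
      have hq2A : (q₂:ℚ) - A₁ = (m:ℚ) * q₁ * D₂ := by exact_mod_cast hD₂
      rw [zpow_sub₀ hq0]
      field_simp
      linear_combination -hq2A
    have hq₂q₁ : ¬ ((q₂:ℤ) ∣ (q₁:ℤ)) := by
      intro h
      have h2 : (0:ℤ) < (q₁:ℤ) := by exact_mod_cast hq₁P.pos
      have := Int.le_of_dvd h2 h
      omega
    obtain ⟨W, hWd⟩ := exists_pow_cong (p := p) q₂ hq₂P hq₂ord (q₁:ℤ) hq₂q₁
    obtain ⟨E, hE⟩ := hWd
    set s₂ : ZinvP p := (m : ZinvP p) * elt p hq0 E (u₂ - u₁) with hs₂def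
    set c₂ : ZinvP p := (m : ZinvP p) * elt p hq0 1 (u₂ + W) with hc₂def
    have hc₂ : c₁ + s₂ * a₂ = c₂ := by
      apply Subtype.ext
      push_cast [hs₂def, hc₂def, hc₁def, ha₂def, val_elt]
      have hEQ : (p:ℚ)^(W:ℕ) - q₁ = q₂ * E := by exact_mod_cast hE
      rw [zpow_sub₀ hq0, zpow_add₀ hq0]
      field_simp
      rw [zpow_natCast]
      linear_combination -hEQ
    have ha₂I : (1:ZinvP p) - a₂ ∈ Ideal.span {((m : ZinvP p))} := by
      have heq : (1:ZinvP p) - a₂ = -((a₁ - 1) + t₁ * c₁) := by rw [← ha₂]; ring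
      rw [heq]
      refine neg_mem (add_mem ha₁I ?_)
      rw [hc₁def]
      exact Ideal.mem_span_singleton.mpr ⟨t₁ * elt p hq0 q₁ u₂, by ring⟩
    obtain ⟨y, hy⟩ := Ideal.mem_span_singleton.mp ha₂I
    set t₂ : ZinvP p := y * elt p hq0 1 (-(u₂ + W)) with ht₂def
    have hee : elt p hq0 1 (-(u₂ + W)) * elt p hq0 1 (u₂ + W) = 1 := by
      rw [elt_mul, one_mul, neg_add_cancel]
      exact elt_one_zero hq0
    have ha₃ : a₂ + t₂ * c₂ = 1 := by
      have h' : t₂ * c₂ = (m:ZinvP p) * y *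
          (elt p hq0 1 (-(u₂ + W)) * elt p hq0 1 (u₂ + W)) := by
        rw [ht₂def, hc₂def]; ring
      rw [h', hee, mul_one]
      linear_combination -hy
    set s₃ : ZinvP p := -c₂ with hs₃def
    have hc₃ : c₂ + s₃ * 1 = 0 := by rw [hs₃def]; ring
    -- memberships
    have hs₁I : s₁ ∈ Ideal.span {((m : ZinvP p))} :=
      Ideal.mem_span_singleton.mpr ⟨elt p hq0 D₁ (u₂ - u₁), hs₁def⟩
    have hs₂I : s₂ ∈ Ideal.span {((m : ZinvP p))} :=
      Ideal.mem_span_singleton.mpr ⟨elt p hq0 E (u₂ - u₁), hs₂def⟩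
    have hs₃I : s₃ ∈ Ideal.span {((m : ZinvP p))} :=
      Ideal.mem_span_singleton.mpr ⟨-elt p hq0 1 (u₂ + W), by rw [hs₃def, hc₂def]; ring⟩
    -- the matrix word
    obtain ⟨X, Y, hstep⟩ : ∃ X Y : ZinvP p,
        LL s₃ * (UU t₂ * (LL s₂ * (UU t₁ * (LL s₁ * (UU t₀ * g))))) = !![1, X; 0, Y] := by
      rw [hgm, UU_mul_mat, ha₁def, LL_mul_mat, hc₁, UU_mul_mat, ha₂, LL_mul_mat, hc₂,
        UU_mul_mat, ha₃, LL_mul_mat, hc₃]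
      exact ⟨_, _, rfl⟩
    have hY : Y = 1 := by
      have hd6 : (!![(1:ZinvP p), X; 0, Y]).det = 1 := by
        rw [← hstep]
        simp only [Matrix.det_mul, det_UU, det_LL, one_mul, hdet]
      simpa [Matrix.det_fin_two] using hd6
    subst hY
    have hUX : LL s₃ * (UU t₂ * (LL s₂ * (UU t₁ * (LL s₁ * (UU t₀ * g))))) = UU X := hstep
    have hw : g = UU (-t₀) * (LL (-s₁) * (UU (-t₁) * (LL (-s₂) * (UU (-t₂) *
        (LL (-s₃) * UU X))))) := by
      rw [← hUX, LL_cancel, UU_cancel, LL_cancel, UU_cancel, LL_cancel, UU_cancel]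
    exact fold p m (-s₁) (-s₂) (-s₃) (neg_mem hs₁I) (neg_mem hs₂I) (neg_mem hs₃I)
      (-t₀) (-t₁) (-t₂) X g hg (by simpa only [mul_assoc] using hw)
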